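/- Let (F, d) be a geodesic metric space (every pair of points is joined by an isometric image of a real interval) with diameter D_F := sup_{x,y∈F} d(x,y) > 0, let μ be a Borel measure on F, and suppose there exist constants 0 < c_l ≤ c_u, R₀ > 0, c_d ≥ 1 and a non-decreasing function v : (0,∞) → (0,∞) with v(2r) ≤ c_d·v(r) for all r > 0, such that c_l·v(r) ≤ μ(B(x,r)) ≤ c_u·v(r) for every x ∈ F and r ∈ (0, R₀). Then there exists a constant c > 0, depending only on c_l, c_u and c_d, such that for every integer k ≥ 1 and every D with 0 < D < D_F and 2D < R₀, one has v(D) ≥ c·k·v(D/k). -/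

import Mathlib

open MeasureTheory

/-- Volume comparison along geodesics (used in Theorems 5.1(b) and 1.1(b)):
in a geodesic space carrying a measure with uniform doubling volume growth,
`v(D) ≥ c · k · v(D/k)` for all integers `k ≥ 1` and all `D` with
`0 < D < D_F` and `2D < R₀`. -/
theorem stmt_11 {F : Type*} [MetricSpace F] [MeasurableSpace F] [BorelSpace F]
    (hgeo : ∀ x y : F, ∃ g : ℝ → F, g 0 = x ∧ g (dist x y) = y ∧
      ∀ s ∈ Set.Icc (0:ℝ) (dist x y), ∀ t ∈ Set.Icc (0:ℝ) (dist x y),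
        dist (g s) (g t) = |s - t|)
    (hdiam : 0 < EMetric.diam (Set.univ : Set F))
    (μ : Measure F) (cl cu R₀ cd : ℝ)
    (hcl : 0 < cl) (hclu : cl ≤ cu) (hR₀ : 0 < R₀) (hcd : 1 ≤ cd)
    (v : ℝ → ℝ) (hv_pos : ∀ r : ℝ, 0 < r → 0 < v r)
    (hv_mono : ∀ r s : ℝ, 0 < r → r ≤ s → v r ≤ v s)
    (hv_doub : ∀ r : ℝ, 0 < r → v (2 * r) ≤ cd * v r)
    (hvol : ∀ x : F, ∀ r ∈ Set.Ioo (0:ℝ) R₀,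
      ENNReal.ofReal (cl * v r) ≤ μ (Metric.ball x r) ∧
      μ (Metric.ball x r) ≤ ENNReal.ofReal (cu * v r)) :
    ∃ c : ℝ, 0 < c ∧ ∀ k : ℕ, 1 ≤ k → ∀ D : ℝ, 0 < D →
      ENNReal.ofReal D < EMetric.diam (Set.univ : Set F) → 2 * D < R₀ →
      c * k * v (D / k) ≤ v D := by
  have hcu : 0 < cu := lt_of_lt_of_le hcl hclu
  have hcd0 : (0:ℝ) < cd := lt_of_lt_of_le one_pos hcd
  refine ⟨cl / (cu * cd ^ 2), by positivity, ?_⟩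
  intro k hk D hD hDdiam hDR
  -- find points at distance > D
  obtain ⟨x, y, hxy⟩ : ∃ x y : F, D < dist x y := by
    by_contra h
    push_neg at h
    have hle : EMetric.diam (Set.univ : Set F) ≤ ENNReal.ofReal D := by
      apply EMetric.diam_le
      intro a _ b _
      rw [edist_dist]
      exact ENNReal.ofReal_le_ofReal (h a b)
    exact absurd hDdiam (not_lt.mpr hle)
  obtain ⟨g, hg0, hgL, hg⟩ := hgeo x y
  have hkR : (1:ℝ) ≤ (k:ℝ) := by exact_mod_cast hk
  have hk0 : (0:ℝ) < (k:ℝ) := lt_of_lt_of_le one_pos hkR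
  set r : ℝ := D / (2 * k) with hrdef
  have hr0 : 0 < r := by positivity
  have hrkD : 2 * (k:ℝ) * r = D := by
    rw [hrdef]
    field_simp
  have hrD : r ≤ D := by
    nlinarith
  have hrR : r < R₀ := lt_of_le_of_lt hrD (by linarith)
  set s : Fin k → ℝ := fun i => (2 * (i:ℝ) + 1) * r with hsdef
  have hs_mem : ∀ i : Fin k, s i ∈ Set.Icc (0:ℝ) (dist x y) := by
    intro i
    have hi : (i:ℝ) ≤ (k:ℝ) - 1 := by
      have : (i:ℕ) + 1 ≤ k := i.2
      have : ((i:ℕ):ℝ) + 1 ≤ (k:ℝ) := by exact_mod_cast this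
      linarith
    constructor
    · have : (0:ℝ) ≤ (i:ℝ) := Nat.cast_nonneg _
      simp only [hsdef]
      positivity
    · have : s i ≤ (2 * (k:ℝ) - 1) * r := by
        simp only [hsdef]
        nlinarith
      nlinarith
  have hdistx : ∀ i : Fin k, dist (g (s i)) x = s i := by
    intro i
    have h0 : (0:ℝ) ∈ Set.Icc (0:ℝ) (dist x y) := ⟨le_refl _, dist_nonneg⟩
    have := hg (s i) (hs_mem i) 0 h0
    rw [hg0] at this
    rw [this, sub_zero, abs_of_nonneg (hs_mem i).1]
  have hdisj : Pairwise (Function.onFun Disjoint fun i : Fin k => Metric.ball (g (s i)) r) := by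
    intro i j hij
    apply Metric.ball_disjoint_ball
    have hdij : dist (g (s i)) (g (s j)) = |s i - s j| := hg _ (hs_mem i) _ (hs_mem j)
    have hne : ((i:Fin k):ℕ) ≠ ((j:Fin k):ℕ) := fun h => hij (Fin.ext h)
    have h1 : (1:ℝ) ≤ |(i:ℝ) - (j:ℝ)| := by
      have hz : ((i:ℕ):ℤ) - ((j:ℕ):ℤ) ≠ 0 := sub_ne_zero.mpr (by exact_mod_cast hne)
      have := Int.one_le_abs hz
      have h2 : (1:ℝ) ≤ |(((i:ℕ):ℤ) - ((j:ℕ):ℤ) : ℤ)| := by exact_mod_cast this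
      calc (1:ℝ) ≤ |(((i:ℕ):ℤ) - ((j:ℕ):ℤ) : ℤ)| := h2
        _ = |(i:ℝ) - (j:ℝ)| := by push_cast; ring_nf
    have hsij : |s i - s j| = 2 * |(i:ℝ) - (j:ℝ)| * r := by
      simp only [hsdef]
      rw [show (2 * (i:ℝ) + 1) * r - (2 * (j:ℝ) + 1) * r = (2 * r) * ((i:ℝ) - (j:ℝ)) by ring,
        abs_mul, abs_of_nonneg (by positivity : (0:ℝ) ≤ 2 * r)]
      ring
    rw [hdij, hsij]
    nlinarith
  have hsub : (⋃ i : Fin k, Metric.ball (g (s i)) r) ⊆ Metric.ball x (2 * D) := by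
    apply Set.iUnion_subset
    intro i
    apply Metric.ball_subset_ball'
    rw [hdistx i]
    have : s i ≤ (2 * (k:ℝ) - 1) * r := by
      simp only [hsdef]
      have hi : (i:ℝ) ≤ (k:ℝ) - 1 := by
        have : (i:ℕ) + 1 ≤ k := i.2
        have : ((i:ℕ):ℝ) + 1 ≤ (k:ℝ) := by exact_mod_cast this
        linarith
      nlinarith
    nlinarith
  have key : ENNReal.ofReal ((k:ℝ) * (cl * v r)) ≤ ENNReal.ofReal (cu * v (2 * D)) := by
    calc ENNReal.ofReal ((k:ℝ) * (cl * v r))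
        = ∑ _i : Fin k, ENNReal.ofReal (cl * v r) := by
          rw [Finset.sum_const, Finset.card_univ, Fintype.card_fin,
            ENNReal.ofReal_mul (by positivity : (0:ℝ) ≤ (k:ℝ)), ENNReal.ofReal_natCast,
            nsmul_eq_mul]
      _ ≤ ∑ i : Fin k, μ (Metric.ball (g (s i)) r) :=
          Finset.sum_le_sum fun i _ => (hvol _ r ⟨hr0, hrR⟩).1
      _ = μ (⋃ i : Fin k, Metric.ball (g (s i)) r) := by
          rw [measure_iUnion hdisj fun i => measurableSet_ball, tsum_fintype]
      _ ≤ μ (Metric.ball x (2 * D)) := measure_mono hsub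
      _ ≤ ENNReal.ofReal (cu * v (2 * D)) := (hvol x (2 * D) ⟨by positivity, hDR⟩).2
  have hv2D : 0 < v (2 * D) := hv_pos _ (by positivity)
  have hreal : (k:ℝ) * (cl * v r) ≤ cu * v (2 * D) :=
    (ENNReal.ofReal_le_ofReal_iff (by positivity)).mp key
  have hdoub1 : v (D / (k:ℝ)) ≤ cd * v r := by
    have hDk : D / (k:ℝ) = 2 * r := by
      field_simp [hrdef]
      linarith [hrkD]
    rw [hDk]
    exact hv_doub r hr0
  have hdoub2 : v (2 * D) ≤ cd * v D := hv_doub D hD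
  have hvr : 0 < v r := hv_pos _ hr0
  have hvD : 0 < v D := hv_pos _ hD
  have hvDk : 0 < v (D / (k:ℝ)) := hv_pos _ (by positivity)
  rw [div_mul_eq_mul_div, div_mul_eq_mul_div, div_le_iff₀ (by positivity)]
  nlinarith [mul_le_mul_of_nonneg_left hdoub2 (le_of_lt hcu),
    mul_le_mul_of_nonneg_left hreal (le_of_lt hcd0),
    mul_le_mul_of_nonneg_left hdoub1 (mul_nonneg (le_of_lt hcl) (le_of_lt hk0))]
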